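/- Let 2 ≤ m < n be integers, let G ≤ Sym(m), and suppose Ã is a complete prefix code over A_m with |Ã| = n such that the letterwise action of every σ ∈ G maps Ã onto itself. Let H ≤ Sym(n) be the image of the root group R_G(Ã) under the group isomorphism Sym(Ã) ≅ Sym(n) induced by listing Ã in dictionary order as a_0 <_dict a_1 <_dict ⋯ <_dict a_{n−1} and identifying a_i with i. Then there exists an injective group homomorphism from V_n(H) into V_m(G). -/

import Mathlib

namespace Paper

/-- Concatenation of a finite word with an infinite word. -/
def cat {n : ℕ} (w : List (Fin n)) (ζ : ℕ → Fin n) : ℕ → Fin n :=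
  fun i => if h : i < w.length then w[i]'h else ζ (i - w.length)

/-- The finite word `w` is a prefix of the infinite word `ζ`. -/
def IsPref {n : ℕ} (w : List (Fin n)) (ζ : ℕ → Fin n) : Prop :=
  ∀ (i : ℕ) (h : i < w.length), w[i]'h = ζ i

/-- An indexed family of finite words is a complete prefix code: every infinite
word has exactly one member of the family as a prefix. -/
def IsCPC {n : ℕ} {ι : Type} (P : ι → List (Fin n)) : Prop :=
  ∀ ζ : ℕ → Fin n, ∃! i : ι, IsPref (P i) ζ

/-- `f` is the map described by the table with domain code `P`, range code `Q` and
permutations `σ, τ`: it sends `pᵢ‖σᵢ(u)` to `qᵢ‖τᵢ(u)`. -/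
def TableFun {n : ℕ} {ι : Type} (P Q : ι → List (Fin n))
    (σ τ : ι → Equiv.Perm (Fin n)) (f : (ℕ → Fin n) → (ℕ → Fin n)) : Prop :=
  ∀ (i : ι) (u : ℕ → Fin n),
    f (cat (P i) (fun j => σ i (u j))) = cat (Q i) (fun j => τ i (u j))

/-- A table over a subgroup `H ≤ Sym(n)`. -/
structure Table (n : ℕ) (H : Subgroup (Equiv.Perm (Fin n))) where
  k : ℕ
  P : Fin k → List (Fin n)
  Q : Fin k → List (Fin n)
  σ : Fin k → Equiv.Perm (Fin n)
  τ : Fin k → Equiv.Perm (Fin n)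
  σ_mem : ∀ i, σ i ∈ H
  τ_mem : ∀ i, τ i ∈ H
  hP : IsCPC P
  hQ : IsCPC Q

/-- The table `T` induces the map `f`. -/
def Induces {n : ℕ} {H : Subgroup (Equiv.Perm (Fin n))} (T : Table n H)
    (f : (ℕ → Fin n) → (ℕ → Fin n)) : Prop :=
  TableFun T.P T.Q T.σ T.τ f

/-- The symmetric Thompson group `V_n(H)`, as the set of homeomorphisms of the
Cantor space `C_n = A_n^ℕ` induced by tables over `H`. -/
def Vset (n : ℕ) (H : Subgroup (Equiv.Perm (Fin n))) :
    Set ((ℕ → Fin n) ≃ₜ (ℕ → Fin n)) :=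
  { f | ∃ T : Table n H, Induces T ⇑f }

/-- Dictionary order on finite words. -/
def DictLe {N : ℕ} (u v : List (Fin N)) : Prop :=
  u <+: v ∨ ∃ (x s t : List (Fin N)) (α β : Fin N),
    α < β ∧ u = x ++ α :: s ∧ v = x ++ β :: t

/-- Strict dictionary order. -/
def DictLt {N : ℕ} (u v : List (Fin N)) : Prop := DictLe u v ∧ u ≠ v

section Aux
variable {m n : ℕ}

/-- shift of an infinite word -/
def shf {α : Type*} (u : ℕ → α) : ℕ → α := fun j => u (j + 1)

lemma cat_nil (ζ : ℕ → Fin n) : cat ([] : List (Fin n)) ζ = ζ := by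
  funext i; simp [cat]

lemma cat_isPref (w : List (Fin n)) (ζ : ℕ → Fin n) : IsPref w (cat w ζ) := by
  intro i h; simp [cat, h]

lemma isPref_cat_drop {w : List (Fin n)} {ζ : ℕ → Fin n} (h : IsPref w ζ) :
    cat w (fun j => ζ (j + w.length)) = ζ := by
  funext i
  by_cases hi : i < w.length
  · simpa [cat, hi] using h i hi
  · simp only [cat, dif_neg hi]
    congr 1; omega

lemma cat_eval_ge (w : List (Fin n)) (ζ : ℕ → Fin n) (j : ℕ) :
    cat w ζ (j + w.length) = ζ j := by
  simp [cat]

lemma cat_inj {w : List (Fin n)} {ζ η : ℕ → Fin n} (h : cat w ζ = cat w η) : ζ = η := by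
  funext j
  have := congrFun h (j + w.length)
  simpa [cat_eval_ge] using this

lemma cat_append (w₁ w₂ : List (Fin n)) (ζ : ℕ → Fin n) :
    cat (w₁ ++ w₂) ζ = cat w₁ (cat w₂ ζ) := by
  funext i
  rcases lt_or_ge i w₁.length with hi | hi
  · have hi2 : i < (w₁ ++ w₂).length := by simp; omega
    simp only [cat, dif_pos hi, dif_pos hi2]
    exact List.getElem_append_left hi
  · rcases lt_or_ge i (w₁ ++ w₂).length with hi2 | hi2
    · have hlen : i - w₁.length < w₂.length := by simp at hi2; omega
      simp only [cat, dif_pos hi2, dif_neg (not_lt.mpr hi), dif_pos hlen]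
      exact List.getElem_append_right hi
    · have h3 : ¬ i - w₁.length < w₂.length := by simp at hi2; omega
      simp only [cat, dif_neg (not_lt.mpr hi), dif_neg (not_lt.mpr hi2), dif_neg h3]
      congr 1; simp; omega

lemma cat_cons_zero (x : Fin n) (w : List (Fin n)) (ζ : ℕ → Fin n) :
    cat (x :: w) ζ 0 = x := by simp [cat]

lemma shf_cat_cons (x : Fin n) (w : List (Fin n)) (ζ : ℕ → Fin n) :
    shf (cat (x :: w) ζ) = cat w ζ := by
  funext j
  by_cases hj : j < w.length
  · have : j + 1 < (x :: w).length := by simp; omega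
    simp [shf, cat, hj, this]
  · have : ¬ j + 1 < (x :: w).length := by simp; omega
    simp only [shf, cat, dif_neg this, dif_neg hj]
    congr 1; simp

variable (A : Fin n → List (Fin m))

/-- concatenated translation of a finite word -/
def Abar (w : List (Fin n)) : List (Fin m) := w.flatMap A

lemma Abar_nil : Abar A [] = [] := rfl
lemma Abar_cons (x : Fin n) (w : List (Fin n)) : Abar A (x :: w) = A x ++ Abar A w := rfl

/-- block list: concatenation of the first `k` blocks -/
def Bl (u : ℕ → Fin n) (k : ℕ) : List (Fin m) :=
  ((List.range k).map (fun j => A (u j))).flatten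

lemma Bl_succ (u : ℕ → Fin n) (k : ℕ) : Bl A u (k + 1) = Bl A u k ++ A (u k) := by
  simp [Bl, List.range_succ]

lemma Bl_cons (u : ℕ → Fin n) (k : ℕ) :
    Bl A u (k + 1) = A (u 0) ++ Bl A (shf u) k := by
  induction k with
  | zero => simp [Bl, List.range_succ]
  | succ k ih =>
    rw [Bl_succ, ih, Bl_succ, List.append_assoc]
    rfl

lemma Bl_prefix (u : ℕ → Fin n) {k l : ℕ} (h : k ≤ l) : Bl A u k <+: Bl A u l := by
  induction l with
  | zero => simp at h; simp [h]
  | succ l ih =>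
    rcases Nat.lt_or_ge k (l+1) with h1 | h1
    · exact (ih (by omega)).trans (by rw [Bl_succ]; exact List.prefix_append _ _)
    · have : k = l + 1 := by omega
      simp [this]

variable (hne : ∀ i, A i ≠ [])

include hne in
lemma Bl_len (u : ℕ → Fin n) (k : ℕ) : k ≤ (Bl A u k).length := by
  induction k with
  | zero => simp
  | succ k ih =>
    rw [Bl_succ]
    have : 0 < (A (u k)).length := List.length_pos_iff.mpr (hne (u k))
    simp; omega

variable [NeZero m]

/-- the infinite concatenation of blocks -/
def theta (u : ℕ → Fin n) : ℕ → Fin m := fun i => (Bl A u (i + 1)).getD i 0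

include hne in
lemma theta_stable (u : ℕ → Fin n) {i k : ℕ} (h : i < k) :
    theta A u i = (Bl A u k).getD i 0 := by
  have hp := Bl_prefix A u (show i + 1 ≤ k by omega)
  have hl : i < (Bl A u (i+1)).length := by have := Bl_len A hne u (i+1); omega
  have hl2 : i < (Bl A u k).length := by
    have := hp.length_le; omega
  rw [theta, List.getD_eq_getElem _ _ hl, List.getD_eq_getElem _ _ hl2]
  exact hp.getElem hl

include hne in
lemma theta_cat (u : ℕ → Fin n) :
    theta A u = cat (A (u 0)) (theta A (shf u)) := by
  funext i
  by_cases hi : i < (A (u 0)).length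
  · rw [cat]
    rw [dif_pos hi, theta, Bl_cons, List.getD_append _ _ _ _ hi,
      List.getD_eq_getElem _ _ hi]
  · rw [cat, dif_neg hi]
    push_neg at hi
    rw [theta_stable A hne u (show i < i + 2 by omega), Bl_cons,
      List.getD_append_right _ _ _ _ hi]
    exact (theta_stable A hne (shf u) (show i - (A (u 0)).length < i + 1 by omega)).symm

include hne in
lemma theta_cat_word (w : List (Fin n)) (u : ℕ → Fin n) :
    theta A (cat w u) = cat (Abar A w) (theta A u) := by
  induction w generalizing u with
  | nil => rw [Abar_nil, cat_nil, cat_nil]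
  | cons x w ih =>
    rw [theta_cat A hne, cat_cons_zero, shf_cat_cons, ih, Abar_cons, cat_append]

include hne in
lemma theta_map {π : Equiv.Perm (Fin n)} {s : Equiv.Perm (Fin m)}
    (hs : ∀ x, (A x).map ⇑s = A (π x)) :
    ∀ (i : ℕ) (v : ℕ → Fin n), theta A (fun j => π (v j)) i = s (theta A v i) := by
  intro i
  induction i using Nat.strong_induction_on with
  | _ i ih =>
    intro v
    have hlen : ((A (v 0)).map ⇑s).length = (A (v 0)).length := by simp
    have hL : 0 < (A (v 0)).length := List.length_pos_iff.mpr (hne (v 0))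
    have e1 : theta A (fun j => π (v j)) = cat (A (π (v 0))) (theta A (shf fun j => π (v j))) :=
      theta_cat A hne _
    have e2 : theta A v = cat (A (v 0)) (theta A (shf v)) := theta_cat A hne _
    rw [e1, e2, ← hs]
    by_cases hi : i < (A (v 0)).length
    · have hi' : i < ((A (v 0)).map ⇑s).length := by simpa using hi
      simp only [cat, dif_pos hi, dif_pos hi']
      simp
    · have hi' : ¬ i < ((A (v 0)).map ⇑s).length := by simpa using hi
      simp only [cat, dif_neg hi, dif_neg hi', List.length_map]
      have : shf (fun j => π (v j)) = fun j => π (shf v j) := rfl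
      rw [this]
      exact ih (i - (A (v 0)).length) (by omega) (shf v)

include hne in
lemma theta_isPref_head (u : ℕ → Fin n) : IsPref (A (u 0)) (theta A u) := by
  rw [theta_cat A hne]; exact cat_isPref _ _

variable (hA : IsCPC A)

include hne hA in
lemma theta_inj : Function.Injective (theta A) := by
  intro u v huv
  funext k
  induction k using Nat.strong_induction_on generalizing u v with
  | _ k ih =>
    have h0 : u 0 = v 0 := by
      obtain ⟨i, _, hu⟩ := hA (theta A u)
      have h1 := hu (u 0) (theta_isPref_head A hne u)
      have h2 := hu (v 0) (huv ▸ theta_isPref_head A hne v)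
      rw [h1, h2]
    have hsh : theta A (shf u) = theta A (shf v) := by
      apply cat_inj (w := A (u 0))
      rw [← theta_cat A hne u]
      conv_rhs => rw [h0, ← theta_cat A hne v]
      exact huv
    cases k with
    | zero => exact h0
    | succ k => exact ih k (by omega) hsh

/-- decoding step: strip the unique code-word prefix -/
noncomputable def dstep (ζ : ℕ → Fin m) : ℕ → Fin m :=
  fun j => ζ (j + (A ((hA ζ).choose)).length)

/-- decode an infinite word over `A_m` into an infinite word over `A_n` -/
noncomputable def dec (ζ : ℕ → Fin m) : ℕ → Fin n :=
  fun k => (hA ((dstep A hA)^[k] ζ)).choose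

lemma shf_dec (ζ : ℕ → Fin m) : shf (dec A hA ζ) = dec A hA (dstep A hA ζ) := by
  funext k
  simp only [shf, dec, Function.iterate_succ_apply]

lemma dec_zero (ζ : ℕ → Fin m) : dec A hA ζ 0 = (hA ζ).choose := by
  simp [dec]

include hne in
lemma theta_dec : ∀ (i : ℕ) (ζ : ℕ → Fin m), theta A (dec A hA ζ) i = ζ i := by
  intro i
  induction i using Nat.strong_induction_on with
  | _ i ih =>
    intro ζ
    have hpref : IsPref (A ((hA ζ).choose)) ζ := ((hA ζ).choose_spec).1
    have hζ : cat (A ((hA ζ).choose)) (dstep A hA ζ) = ζ := isPref_cat_drop hpref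
    have hL : 0 < (A ((hA ζ).choose)).length := List.length_pos_iff.mpr (hne _)
    have e1 : theta A (dec A hA ζ) =
        cat (A ((hA ζ).choose)) (theta A (dec A hA (dstep A hA ζ))) := by
      rw [theta_cat A hne, dec_zero, shf_dec]
    rw [e1]
    by_cases hi : i < (A ((hA ζ).choose)).length
    · conv_rhs => rw [← hζ]
      simp [cat, hi]
    · simp only [cat, dif_neg hi]
      rw [ih (i - (A ((hA ζ).choose)).length) (by omega) (dstep A hA ζ)]
      conv_rhs => rw [← hζ]
      simp [cat, hi]

include hne hA in
lemma theta_surj : Function.Surjective (theta A) := by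
  intro ζ
  exact ⟨dec A hA ζ, funext fun i => theta_dec A hne hA i ζ⟩

include hne in
lemma isPref_abar {w : List (Fin n)} {u : ℕ → Fin n} (h : IsPref w u) :
    IsPref (Abar A w) (theta A u) := by
  have : theta A u = cat (Abar A w) (theta A (fun j => u (j + w.length))) := by
    conv_lhs => rw [← isPref_cat_drop h]
    rw [theta_cat_word A hne]
  rw [this]; exact cat_isPref _ _

include hne hA in
lemma abar_pref {w : List (Fin n)} :
    ∀ {u : ℕ → Fin n}, IsPref (Abar A w) (theta A u) → IsPref w u := by
  induction w with
  | nil => intro u _ i h; simp at h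
  | cons x w ih =>
    intro u h
    rw [Abar_cons] at h
    have hx : IsPref (A x) (theta A u) := by
      intro i hi
      have hi2 : i < (A x ++ Abar A w).length := by simp; omega
      have := h i hi2
      rwa [List.getElem_append_left hi] at this
    have hx0 : x = u 0 := by
      obtain ⟨i, _, hu⟩ := hA (theta A u)
      rw [hu x hx, hu (u 0) (theta_isPref_head A hne u)]
    have htail : IsPref (Abar A w) (theta A (shf u)) := by
      intro i hi
      have hi2 : i + (A x).length < (A x ++ Abar A w).length := by simp; omega
      have h2 := h (i + (A x).length) hi2
      rw [List.getElem_append_right (by omega)] at h2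
      simp only [Nat.add_sub_cancel] at h2
      rw [h2, theta_cat A hne, ← hx0, cat_eval_ge]
    have hw := ih htail
    intro i hi
    cases i with
    | zero => simpa using hx0
    | succ i =>
      have : i < w.length := by simpa using hi
      simpa [shf] using hw i this

omit hne in
lemma theta_continuous : Continuous (theta A) := by
  apply continuous_pi
  intro i
  have key : (fun u : ℕ → Fin n => theta A u i) =
      (fun t : Fin (i+1) → Fin n =>
        theta A (fun j => if h : j < i + 1 then t ⟨j, h⟩ else t ⟨0, by omega⟩) i) ∘
      (fun u (j : Fin (i+1)) => u j) := by
    funext u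
    simp only [Function.comp_apply]
    have : Bl A u (i+1) =
        Bl A (fun j => if h : j < i + 1 then u j else u 0) (i+1) := by
      unfold Bl
      congr 1
      apply List.map_congr_left
      intro j hj
      rw [List.mem_range] at hj
      simp [hj]
    simp only [theta]
    rw [this]
  rw [key]
  exact (continuous_of_discreteTopology).comp (continuous_pi fun j => continuous_apply j.1)

include hne hA in
lemma theta_bij : Function.Bijective (theta A) :=
  ⟨theta_inj A hne hA, theta_surj A hne hA⟩

end Aux

/-- Let `2 ≤ m < n`, `G ≤ Sym(m)`, and `Ã` a complete prefix code
over `A_m` of size `n` preserved by the letterwise action of `G`, listed in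
dictionary order as `a_0 <_dict ⋯ <_dict a_{n-1}`.  If `H ≤ Sym(n)` is the image of
the root group `R_G(Ã)` under the induced identification `Sym(Ã) ≅ Sym(n)`, then
`V_n(H)` embeds in `V_m(G)`. -/
theorem stmt9 (m n : ℕ) (hm : 2 ≤ m) (hmn : m < n)
    (G : Subgroup (Equiv.Perm (Fin m))) (H : Subgroup (Equiv.Perm (Fin n)))
    (A : Fin n → List (Fin m)) (hA : IsCPC A)
    (hGA : ∀ σ : Equiv.Perm (Fin m), σ ∈ G → ∀ i : Fin n,
      ∃ j : Fin n, (A i).map ⇑σ = A j)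
    (hord : ∀ i j : Fin n, i < j → DictLt (A i) (A j))
    (hH : ∀ π : Equiv.Perm (Fin n), π ∈ H ↔
      ∃ σ : Equiv.Perm (Fin m), σ ∈ G ∧ ∀ i : Fin n, (A i).map ⇑σ = A (π i)) :
    ∃ Φ : ((ℕ → Fin n) ≃ₜ (ℕ → Fin n)) → ((ℕ → Fin m) ≃ₜ (ℕ → Fin m)),
      (∀ f ∈ Vset n H, Φ f ∈ Vset m G) ∧
      Set.InjOn Φ (Vset n H) ∧
      ∀ f ∈ Vset n H, ∀ g ∈ Vset n H, Φ (f.trans g) = (Φ f).trans (Φ g) := by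
  haveI : NeZero m := ⟨by omega⟩
  have hne : ∀ i, A i ≠ [] := by
    intro i h
    obtain ⟨j, hj⟩ : ∃ j : Fin n, j ≠ i := by
      rcases i with ⟨iv, hiv⟩
      by_cases h0 : iv = 0
      · exact ⟨⟨1, by omega⟩, by simp [Fin.ext_iff, h0]⟩
      · exact ⟨⟨0, by omega⟩, by simp [Fin.ext_iff]; omega⟩
    obtain ⟨k, _, huniq⟩ := hA (cat (A j) (fun _ => 0))
    have h1 : IsPref (A j) (cat (A j) fun _ => 0) := cat_isPref _ _
    have h2 : IsPref (A i) (cat (A j) fun _ => 0) := by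
      intro l hl; rw [h] at hl; simp at hl
    exact hj ((huniq j h1).trans (huniq i h2).symm)
  have hbij := theta_bij A hne hA
  let θe : (ℕ → Fin n) ≃ (ℕ → Fin m) := Equiv.ofBijective (theta A) hbij
  have hcont : Continuous ⇑θe := theta_continuous A
  let θh : (ℕ → Fin n) ≃ₜ (ℕ → Fin m) := hcont.homeoOfEquivCompactToT2
  have happ : ∀ x, θh x = theta A x := fun _ => rfl
  have hsymm : ∀ x, θh.symm (theta A x) = x := fun x => by
    rw [← happ x]; exact θh.symm_apply_apply x
  refine ⟨fun f => θh.symm.trans (f.trans θh), ?_, ?_, ?_⟩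
  · rintro f ⟨T, hT⟩
    have hσ : ∀ i, ∃ s : Equiv.Perm (Fin m), s ∈ G ∧ ∀ x, (A x).map ⇑s = A (T.σ i x) :=
      fun i => (hH (T.σ i)).mp (T.σ_mem i)
    have hτ : ∀ i, ∃ s : Equiv.Perm (Fin m), s ∈ G ∧ ∀ x, (A x).map ⇑s = A (T.τ i x) :=
      fun i => (hH (T.τ i)).mp (T.τ_mem i)
    choose σ' hσ'G hσ'A using hσ
    choose τ' hτ'G hτ'A using hτ
    have hcpc : ∀ P : Fin T.k → List (Fin n), IsCPC P →
        IsCPC (fun i => Abar A (P i)) := by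
      intro P hP ζ
      obtain ⟨u, hu⟩ := theta_surj A hne hA ζ
      obtain ⟨i, hi, huniq⟩ := hP u
      refine ⟨i, ?_, ?_⟩
      · rw [← hu]; exact isPref_abar A hne hi
      · intro j hj
        rw [← hu] at hj
        exact huniq j (abar_pref A hne hA hj)
    refine ⟨⟨T.k, fun i => Abar A (T.P i), fun i => Abar A (T.Q i), σ', τ',
      hσ'G, hτ'G, hcpc _ T.hP, hcpc _ T.hQ⟩, ?_⟩
    intro i ζ
    obtain ⟨v, hv⟩ := theta_surj A hne hA ζ
    subst hv
    have e1 : (cat (Abar A (T.P i)) fun j => σ' i (theta A v j)) =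
        theta A (cat (T.P i) (fun j => T.σ i (v j))) := by
      have e0 : (fun j => σ' i (theta A v j)) = theta A (fun j => T.σ i (v j)) :=
        funext fun j => (theta_map A hne (hσ'A i) j v).symm
      rw [e0, theta_cat_word A hne]
    have e2 : (cat (Abar A (T.Q i)) fun j => τ' i (theta A v j)) =
        theta A (cat (T.Q i) (fun j => T.τ i (v j))) := by
      have e0 : (fun j => τ' i (theta A v j)) = theta A (fun j => T.τ i (v j)) :=
        funext fun j => (theta_map A hne (hτ'A i) j v).symm
      rw [e0, theta_cat_word A hne]
    show (θh.symm.trans (f.trans θh)) (cat (Abar A (T.P i)) fun j => σ' i (theta A v j)) = _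
    rw [e1, e2]
    simp only [Homeomorph.trans_apply]
    rw [hsymm, hT i v, happ]
  · intro f _ g _ hfg
    apply Homeomorph.ext
    intro x
    have h1 := congrArg (fun h : (ℕ → Fin m) ≃ₜ (ℕ → Fin m) => h (θh x)) hfg
    simp only [Homeomorph.trans_apply, Homeomorph.symm_apply_apply] at h1
    exact θh.injective h1
  · intro f _ g _
    apply Homeomorph.ext
    intro x
    simp [Homeomorph.trans_apply]

end Paper
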